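/- With R as above (the 'paramodular order' of level pⁿ in M₄(ℚ_p)), the unique way of writing R as an intersection of two maximal orders is R = hⁿM₄(ℤ_p)h^{−n} ∩ W⁻¹hⁿM₄(ℤ_p)h^{−n}W, where h = diag(1,1,1,p) and W = W_{pⁿ} is the Atkin-Lehner matrix [[0,pⁿ,0,0],[1,0,0,0],[0,0,0,1],[0,0,pⁿ,0]]. -/

import Mathlib

open scoped Matrix

variable (p : ℕ) [Fact p.Prime] (n : ℕ)

/-- Exponent pattern of the paramodular order of level `pⁿ`. -/
def paraExp (i j : Fin 4) : ℤ :=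
  if (i = 0 ∧ j = 1) ∨ (i = 2 ∧ j = 1) ∨ (i = 3 ∧ j = 0) ∨ (i = 3 ∧ j = 1) ∨
      (i = 3 ∧ j = 2) then (n : ℤ)
  else if i = 1 ∧ j = 3 then -(n : ℤ)
  else 0

/-- The paramodular order `R` of level `pⁿ` in `M₄(ℚ_p)`, as a set. -/
def paraOrder : Set (Matrix (Fin 4) (Fin 4) ℚ_[p]) :=
  {m | ∀ i j : Fin 4, ‖m i j‖ ≤ (p : ℝ) ^ (-(paraExp n i j))}

/-- `M₄(ℤ_p)` inside `M₄(ℚ_p)`, as a set. -/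
def intMat : Set (Matrix (Fin 4) (Fin 4) ℚ_[p]) :=
  {x | ∀ i j : Fin 4, ‖x i j‖ ≤ 1}

/-- An order in `M₄(ℚ_p)`. -/
def IsOrder (O : Subring (Matrix (Fin 4) (Fin 4) ℚ_[p])) : Prop :=
  (∀ (c : ℤ_[p]) (x : Matrix (Fin 4) (Fin 4) ℚ_[p]), x ∈ O → c • x ∈ O)
  ∧ (∃ S : Finset (Matrix (Fin 4) (Fin 4) ℚ_[p]), (∀ x ∈ S, x ∈ O) ∧
      ∀ x ∈ O, x ∈ Submodule.span ℤ_[p] (↑S : Set (Matrix (Fin 4) (Fin 4) ℚ_[p])))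
  ∧ Submodule.span ℚ_[p] (↑O : Set (Matrix (Fin 4) (Fin 4) ℚ_[p])) = ⊤

/-- A maximal order in `M₄(ℚ_p)`. -/
def IsMaximalOrder (O : Subring (Matrix (Fin 4) (Fin 4) ℚ_[p])) : Prop :=
  IsOrder p O ∧ ∀ O' : Subring (Matrix (Fin 4) (Fin 4) ℚ_[p]),
    IsOrder p O' → O ≤ O' → O' = O

/-- `h = diag(1,1,1,p)`. -/
noncomputable def hMat : Matrix (Fin 4) (Fin 4) ℚ_[p] :=
  Matrix.diagonal ![1, 1, 1, (p : ℚ_[p])]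

/-- The Atkin-Lehner matrix `W_{pⁿ}`. -/
noncomputable def WMat : Matrix (Fin 4) (Fin 4) ℚ_[p] :=
  !![0, (p : ℚ_[p])^n, 0, 0; 1, 0, 0, 0; 0, 0, 0, 1; 0, 0, (p : ℚ_[p])^n, 0]

/-- The maximal order `hⁿ M₄(ℤ_p) h^{−n}`. -/
noncomputable def Omax1 : Set (Matrix (Fin 4) (Fin 4) ℚ_[p]) :=
  (fun x => (hMat p)^n * x * ((hMat p)^n)⁻¹) '' intMat p

/-- The maximal order `W⁻¹ hⁿ M₄(ℤ_p) h^{−n} W`. -/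
noncomputable def Omax2 : Set (Matrix (Fin 4) (Fin 4) ℚ_[p]) :=
  (fun x => (WMat p n)⁻¹ * ((hMat p)^n * x * ((hMat p)^n)⁻¹) * WMat p n) '' intMat p


open Matrix

section Helpers
variable {p}

lemma one_lt_pR : (1:ℝ) < p := by exact_mod_cast (Fact.out : p.Prime).one_lt
lemma pR_pos : (0:ℝ) < p := lt_trans one_pos one_lt_pR
lemma ppow_pos (z : ℤ) : (0:ℝ) < (p:ℝ)^z := zpow_pos pR_pos z
lemma ppow_le_ppow {a b : ℤ} (h : a ≤ b) : (p:ℝ)^a ≤ (p:ℝ)^b :=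
  zpow_le_zpow_right₀ one_lt_pR.le h
lemma ppow_le_ppow_iff {a b : ℤ} : (p:ℝ)^a ≤ (p:ℝ)^b ↔ a ≤ b :=
  zpow_le_zpow_iff_right₀ one_lt_pR
lemma ppow_mul_ppow (a b : ℤ) : (p:ℝ)^a * (p:ℝ)^b = (p:ℝ)^(a+b) :=
  (zpow_add₀ (ne_of_gt pR_pos) a b).symm
lemma pQ_ne_zero : ((p:ℚ_[p]) : ℚ_[p]) ≠ 0 := by
  exact_mod_cast Nat.cast_ne_zero.mpr (Fact.out : p.Prime).ne_zero
lemma norm_pQ_zpow (z : ℤ) : ‖(p:ℚ_[p])^z‖ = (p:ℝ)^(-z) := Padic.norm_p_zpow z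
lemma pQ_zpow_ne_zero (z : ℤ) : (p:ℚ_[p])^z ≠ 0 := zpow_ne_zero z pQ_ne_zero

def EOrd (p : ℕ) [Fact p.Prime] (a : Fin 4 → Fin 4 → ℤ) :
    Set (Matrix (Fin 4) (Fin 4) ℚ_[p]) :=
  {m | ∀ i j : Fin 4, ‖m i j‖ ≤ (p:ℝ) ^ (-(a i j))}

lemma EOrd_congr {a a' : Fin 4 → Fin 4 → ℤ} (h : ∀ i j, a i j = a' i j) :
    EOrd p a = EOrd p a' := by
  unfold EOrd; ext m; constructor <;> intro hm i j
  · rw [← h i j]; exact hm i j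
  · rw [h i j]; exact hm i j

lemma paraOrder_eq : paraOrder p n = EOrd p (paraExp n) := rfl

lemma std_mem_EOrd {a : Fin 4 → Fin 4 → ℤ} {i j : Fin 4} {c : ℚ_[p]} :
    Matrix.single i j c ∈ EOrd p a ↔ ‖c‖ ≤ (p:ℝ)^(-(a i j)) := by
  constructor
  · intro h; have := h i j; rwa [single_apply_same] at this
  · intro h i' j'
    by_cases h' : i = i' ∧ j = j'
    · obtain ⟨rfl, rfl⟩ := h'; rwa [single_apply_same]
    · rw [single_apply_of_ne _ _ _ _ _ h', norm_zero]
      exact le_of_lt (ppow_pos _)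

lemma le_ppow_neg_max_iff {x : ℝ} {a b : ℤ} :
    x ≤ (p:ℝ)^(-(max a b)) ↔ x ≤ (p:ℝ)^(-a) ∧ x ≤ (p:ℝ)^(-b) := by
  have h : (p:ℝ)^(-(max a b)) = min ((p:ℝ)^(-a)) ((p:ℝ)^(-b)) := by
    rcases le_total a b with h | h
    · rw [max_eq_right h, min_eq_right (ppow_le_ppow (neg_le_neg h))]
    · rw [max_eq_left h, min_eq_left (ppow_le_ppow (neg_le_neg h))]
  rw [h, le_min_iff]

lemma EOrd_inter {a a' : Fin 4 → Fin 4 → ℤ} :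
    EOrd p a ∩ EOrd p a' = EOrd p (fun i j => max (a i j) (a' i j)) := by
  ext m
  constructor
  · rintro ⟨h1, h2⟩ i j; exact le_ppow_neg_max_iff.mpr ⟨h1 i j, h2 i j⟩
  · intro h
    exact ⟨fun i j => (le_ppow_neg_max_iff.mp (h i j)).1,
           fun i j => (le_ppow_neg_max_iff.mp (h i j)).2⟩

lemma std_mul_std (m : Matrix (Fin 4) (Fin 4) ℚ_[p]) (i j : Fin 4) :
    Matrix.single i i 1 * m * Matrix.single j j 1 = Matrix.single i j (m i j) := by
  ext a b
  by_cases hb : b = j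
  · subst hb
    rw [mul_single_apply_same]
    by_cases ha : a = i
    · subst ha
      rw [single_mul_apply_same, one_mul, mul_one, single_apply_same]
    · rw [single_mul_apply_of_ne _ _ _ _ _ ha, zero_mul,
        single_apply_of_ne _ _ _ _ _ (fun h => ha h.1.symm)]
  · rw [mul_single_apply_of_ne _ _ _ _ _ hb,
      single_apply_of_ne _ _ _ _ _ (fun h => hb h.2.symm)]
end Helpers
section Images
variable {p n}

lemma mono_image (t u : Fin 4 → ℚ_[p]) (A B : Matrix (Fin 4) (Fin 4) ℚ_[p])
    (σ ρ : Fin 4 → Fin 4) (hσ : ∀ i, σ (σ i) = i) (hρ : ∀ j, ρ (ρ j) = j)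
    (hform : ∀ (x : Matrix (Fin 4) (Fin 4) ℚ_[p]) i j,
      (A * x * B) i j = t i * x (σ i) (ρ j) * u j)
    (a : Fin 4 → Fin 4 → ℤ)
    (ha : ∀ i j, ‖t i‖ * ‖u j‖ = (p:ℝ) ^ (-(a i j))) :
    (fun x => A * x * B) '' intMat p = EOrd p a := by
  have htpos : ∀ i, 0 < ‖t i‖ := by
    intro i
    rcases (mul_pos_iff.mp (ha i 0 ▸ ppow_pos (-(a i 0)))) with ⟨h1, _⟩ | ⟨h1, _⟩
    · exact h1
    · exact absurd h1 (not_lt.mpr (norm_nonneg _))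
  have hupos : ∀ j, 0 < ‖u j‖ := by
    intro j
    rcases (mul_pos_iff.mp (ha 0 j ▸ ppow_pos (-(a 0 j)))) with ⟨_, h1⟩ | ⟨_, h1⟩
    · exact h1
    · exact absurd h1 (not_lt.mpr (norm_nonneg _))
  have ht0 : ∀ i, t i ≠ 0 := fun i => norm_pos_iff.mp (htpos i)
  have hu0 : ∀ j, u j ≠ 0 := fun j => norm_pos_iff.mp (hupos j)
  ext m
  constructor
  · rintro ⟨x, hx, rfl⟩ i j
    show ‖(A * x * B) i j‖ ≤ _
    rw [hform, norm_mul, norm_mul]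
    calc ‖t i‖ * ‖x (σ i) (ρ j)‖ * ‖u j‖ ≤ ‖t i‖ * 1 * ‖u j‖ := by
          gcongr
          exact hx _ _
      _ = (p:ℝ)^(-(a i j)) := by rw [mul_one]; exact ha i j
  · intro hm
    refine ⟨Matrix.of (fun k l => (t (σ k))⁻¹ * m (σ k) (ρ l) * (u (ρ l))⁻¹), ?_, ?_⟩
    · intro k l
      rw [Matrix.of_apply, norm_mul, norm_mul, norm_inv, norm_inv]
      have hb : ‖m (σ k) (ρ l)‖ ≤ ‖t (σ k)‖ * ‖u (ρ l)‖ := by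
        rw [ha]; exact hm (σ k) (ρ l)
      calc ‖t (σ k)‖⁻¹ * ‖m (σ k) (ρ l)‖ * ‖u (ρ l)‖⁻¹
          ≤ ‖t (σ k)‖⁻¹ * (‖t (σ k)‖ * ‖u (ρ l)‖) * ‖u (ρ l)‖⁻¹ := by gcongr
        _ = 1 := by
            field_simp
            exact div_self (mul_ne_zero (ne_of_gt (htpos _)) (ne_of_gt (hupos _)))
    · show A * _ * B = m
      ext i j
      rw [hform, Matrix.of_apply, hσ, hρ]
      have heq : t i * ((t i)⁻¹ * m i j * (u j)⁻¹) * u j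
           = (t i * (t i)⁻¹) * m i j * ((u j)⁻¹ * u j) := by ring
      rw [heq, mul_inv_cancel₀ (ht0 i), inv_mul_cancel₀ (hu0 j), one_mul, mul_one]
end Images

section MaxOrders
variable {p n}

def a1 (n : ℕ) : Fin 4 → Fin 4 → ℤ := fun i j =>
  (if i = 3 then (n:ℤ) else 0) - (if j = 3 then (n:ℤ) else 0)

def a2 (n : ℕ) : Fin 4 → Fin 4 → ℤ := fun i j =>
  (if j = 1 then (n:ℤ) else 0) - (if i = 1 then (n:ℤ) else 0)

lemma norm_pQ_pow : ‖((p:ℚ_[p]))^n‖ = (p:ℝ)^(-(n:ℤ)) := by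
  rw [← zpow_natCast, norm_pQ_zpow]

lemma norm_pQ_pow_inv : ‖(((p:ℚ_[p]))^n)⁻¹‖ = (p:ℝ)^((n:ℤ)) := by
  rw [norm_inv, norm_pQ_pow, ← _root_.zpow_neg, neg_neg]

noncomputable def dv (p : ℕ) [Fact p.Prime] (n : ℕ) : Fin 4 → ℚ_[p] :=
  ![1, 1, 1, (p:ℚ_[p])^n]

noncomputable def dv' (p : ℕ) [Fact p.Prime] (n : ℕ) : Fin 4 → ℚ_[p] :=
  ![1, 1, 1, ((p:ℚ_[p])^n)⁻¹]

lemma hpow_eq : (hMat p)^n = Matrix.diagonal (dv p n) := by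
  have h : (![1, 1, 1, (p:ℚ_[p])] ^ n) = dv p n := by
    funext i
    fin_cases i <;> simp [dv, Pi.pow_apply]
  rw [hMat, Matrix.diagonal_pow, h]

lemma hpow_inv : ((hMat p)^n)⁻¹ = Matrix.diagonal (dv' p n) := by
  apply Matrix.inv_eq_right_inv
  rw [hpow_eq, Matrix.diagonal_mul_diagonal]
  have h : (fun i => dv p n i * dv' p n i) = fun _ => (1:ℚ_[p]) := by
    funext i
    fin_cases i <;>
      simp [dv, dv', mul_inv_cancel₀ (pow_ne_zero n (pQ_ne_zero (p := p)))]
  rw [h, Matrix.diagonal_one]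

lemma Omax1_eq : Omax1 p n = EOrd p (a1 n) := by
  unfold Omax1
  rw [hpow_inv, hpow_eq]
  refine mono_image (dv p n) (dv' p n) _ _ id id (fun _ => rfl) (fun _ => rfl)
    (fun x i j => by rw [Matrix.mul_diagonal, Matrix.diagonal_mul]; rfl) (a1 n) ?_
  intro i j
  fin_cases i <;> fin_cases j <;>
    simp [a1, dv, dv', norm_pQ_pow, norm_pQ_pow_inv, ppow_mul_ppow]

def sg : Fin 4 → Fin 4 := ![1, 0, 3, 2]

lemma sg_sg : ∀ i, sg (sg i) = i := by decide

noncomputable def tw (p : ℕ) [Fact p.Prime] (n : ℕ) : Fin 4 → ℚ_[p] :=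
  ![1, ((p:ℚ_[p])^n)⁻¹, 1, 1]

noncomputable def uw (p : ℕ) [Fact p.Prime] (n : ℕ) : Fin 4 → ℚ_[p] :=
  ![1, (p:ℚ_[p])^n, 1, 1]

noncomputable def Aw (p : ℕ) [Fact p.Prime] (n : ℕ) : Matrix (Fin 4) (Fin 4) ℚ_[p] :=
  !![0, 1, 0, 0; ((p:ℚ_[p])^n)⁻¹, 0, 0, 0; 0, 0, 0, 1; 0, 0, 1, 0]

noncomputable def Bw (p : ℕ) [Fact p.Prime] (n : ℕ) : Matrix (Fin 4) (Fin 4) ℚ_[p] :=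
  !![0, (p:ℚ_[p])^n, 0, 0; 1, 0, 0, 0; 0, 0, 0, 1; 0, 0, 1, 0]

lemma W_sq : WMat p n * WMat p n = ((p:ℚ_[p])^n) • 1 := by
  ext i j
  fin_cases i <;> fin_cases j <;>
    simp [WMat, Matrix.mul_apply, Fin.sum_univ_four, Matrix.one_apply,
      Matrix.vecHead, Matrix.vecTail]

lemma W_inv : (WMat p n)⁻¹ = ((p:ℚ_[p])^n)⁻¹ • WMat p n := by
  apply Matrix.inv_eq_right_inv
  rw [mul_smul_comm, W_sq, smul_smul,
    inv_mul_cancel₀ (pow_ne_zero n (pQ_ne_zero (p := p))), one_smul]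

lemma WinvD_eq : (WMat p n)⁻¹ * Matrix.diagonal (dv p n) = Aw p n := by
  rw [W_inv]
  ext i j
  fin_cases i <;> fin_cases j <;>
    simp [WMat, Aw, dv, Matrix.mul_diagonal, Matrix.smul_apply, smul_eq_mul,
      Matrix.vecHead, Matrix.vecTail,
      inv_mul_cancel₀ (pow_ne_zero n (pQ_ne_zero (p := p)))]

lemma DW_eq : Matrix.diagonal (dv' p n) * WMat p n = Bw p n := by
  ext i j
  fin_cases i <;> fin_cases j <;>
    simp [WMat, Bw, dv', Matrix.diagonal_mul, Matrix.vecHead, Matrix.vecTail,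
      inv_mul_cancel₀ (pow_ne_zero n (pQ_ne_zero (p := p)))]

lemma Aw_form : ∀ (x : Matrix (Fin 4) (Fin 4) ℚ_[p]) (i j : Fin 4),
    (Aw p n * x * Bw p n) i j = tw p n i * x (sg i) (sg j) * uw p n j := by
  intro x i j
  fin_cases i <;> fin_cases j <;>
    (simp [Aw, Bw, tw, uw, sg, Matrix.mul_apply, Fin.sum_univ_four,
      Matrix.vecHead, Matrix.vecTail, Matrix.vecMul, dotProduct]; try ring)

lemma Omax2_eq : Omax2 p n = EOrd p (a2 n) := by
  unfold Omax2
  have hfun : (fun x => (WMat p n)⁻¹ * ((hMat p)^n * x * ((hMat p)^n)⁻¹) * WMat p n)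
      = fun x : Matrix (Fin 4) (Fin 4) ℚ_[p] => Aw p n * x * Bw p n := by
    funext x
    rw [← WinvD_eq, ← DW_eq, hpow_inv, hpow_eq]
    simp only [mul_assoc]
  rw [hfun]
  refine mono_image (tw p n) (uw p n) _ _ sg sg sg_sg sg_sg Aw_form (a2 n) ?_
  intro i j
  fin_cases i <;> fin_cases j <;>
    simp [a2, tw, uw, norm_pQ_pow, norm_pQ_pow_inv, ppow_mul_ppow]

end MaxOrders

section Part1
variable {p n}

lemma paraExp_eq_max : ∀ i j, paraExp n i j = max (a1 n i j) (a2 n i j) := by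
  intro i j
  fin_cases i <;> fin_cases j <;> simp [paraExp, a1, a2] <;> omega

lemma part1 : paraOrder p n = Omax1 p n ∩ Omax2 p n := by
  rw [Omax1_eq, Omax2_eq, EOrd_inter, paraOrder_eq, EOrd_congr paraExp_eq_max]

end Part1

section DOrdSec
variable {p}

def bdiff (b : Fin 4 → ℤ) : Fin 4 → Fin 4 → ℤ := fun i j => b i - b j

lemma EOrd_bdiff_mem {b : Fin 4 → ℤ} {m : Matrix (Fin 4) (Fin 4) ℚ_[p]} :
    m ∈ EOrd p (bdiff b) ↔ ∀ i j, ‖m i j‖ ≤ (p:ℝ)^(-(b i - b j)) := Iff.rfl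

noncomputable def DOrd (p : ℕ) [Fact p.Prime] (b : Fin 4 → ℤ) :
    Subring (Matrix (Fin 4) (Fin 4) ℚ_[p]) where
  carrier := EOrd p (bdiff b)
  zero_mem' := by
    intro i j
    rw [Matrix.zero_apply, norm_zero]
    exact (ppow_pos _).le
  one_mem' := by
    intro i j
    by_cases h : i = j
    · subst h
      rw [Matrix.one_apply_eq, norm_one]
      have : -(bdiff b i i) = 0 := by simp [bdiff]
      rw [this, zpow_zero]
    · rw [Matrix.one_apply_ne h, norm_zero]
      exact (ppow_pos _).le
  add_mem' := by
    intro x y hx hy i j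
    rw [Matrix.add_apply]
    exact le_trans (Padic.nonarchimedean _ _) (max_le (hx i j) (hy i j))
  neg_mem' := by
    intro x hx i j
    rw [Matrix.neg_apply, norm_neg]
    exact hx i j
  mul_mem' := by
    intro x y hx hy i j
    rw [Matrix.mul_apply]
    apply IsUltrametricDist.norm_sum_le_of_forall_le_of_nonneg (ppow_pos _).le
    intro k _
    rw [norm_mul]
    calc ‖x i k‖ * ‖y k j‖ ≤ (p:ℝ)^(-(bdiff b i k)) * (p:ℝ)^(-(bdiff b k j)) := by
          apply mul_le_mul (hx i k) (hy k j) (norm_nonneg _) (ppow_pos _).le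
      _ = (p:ℝ)^(-(bdiff b i j)) := by
          rw [ppow_mul_ppow]
          congr 1
          simp [bdiff]
          try ring
  
lemma DOrd_carrier (b : Fin 4 → ℤ) : (↑(DOrd p b) : Set _) = EOrd p (bdiff b) := rfl

lemma std_smul_eq {i j : Fin 4} (c d : ℚ_[p]) :
    Matrix.single i j (c * d) = c • Matrix.single i j d := by
  rw [smul_single, smul_eq_mul]

lemma DOrd_isOrder (b : Fin 4 → ℤ) : IsOrder p (DOrd p b) := by
  refine ⟨?_, ?_, ?_⟩
  · intro c x hx i j
    have he : (c • x) i j = (c : ℚ_[p]) * x i j := rfl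
    rw [he, norm_mul]
    calc ‖(c:ℚ_[p])‖ * ‖x i j‖ ≤ 1 * ‖x i j‖ :=
          mul_le_mul_of_nonneg_right c.2 (norm_nonneg _)
      _ = ‖x i j‖ := one_mul _
      _ ≤ _ := hx i j
  · classical
    refine ⟨Finset.image
      (fun ij : Fin 4 × Fin 4 => Matrix.single ij.1 ij.2 ((p:ℚ_[p])^(b ij.1 - b ij.2)))
      Finset.univ, ?_, ?_⟩
    · intro x hx
      obtain ⟨ij, _, rfl⟩ := Finset.mem_image.mp hx
      show _ ∈ EOrd p (bdiff b)
      rw [std_mem_EOrd, norm_pQ_zpow]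
      exact le_of_eq rfl
    · intro x hx
      rw [matrix_eq_sum_single x]
      apply Submodule.sum_mem
      intro i _
      apply Submodule.sum_mem
      intro j _
      have hnorm : ‖x i j * (p:ℚ_[p])^(-(b i - b j))‖ ≤ 1 := by
        rw [norm_mul, norm_pQ_zpow, neg_neg]
        calc ‖x i j‖ * (p:ℝ)^(b i - b j)
            ≤ (p:ℝ)^(-(b i - b j)) * (p:ℝ)^(b i - b j) :=
              mul_le_mul_of_nonneg_right (hx i j) (ppow_pos _).le
          _ = 1 := by rw [ppow_mul_ppow, neg_add_cancel, zpow_zero]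
      set u : ℤ_[p] := ⟨x i j * (p:ℚ_[p])^(-(b i - b j)), hnorm⟩ with hu
      have hs : u • ((p:ℚ_[p])^(b i - b j)) = x i j := by
        show x i j * (p:ℚ_[p])^(-(b i - b j)) * (p:ℚ_[p])^(b i - b j) = x i j
        rw [mul_assoc, ← zpow_add₀ pQ_ne_zero, neg_add_cancel, zpow_zero, mul_one]
      have hdec : Matrix.single i j (x i j)
          = u • Matrix.single i j ((p:ℚ_[p])^(b i - b j)) := by
        rw [smul_single, hs]
      rw [hdec]
      apply Submodule.smul_mem
      apply Submodule.subset_span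
      simp only [Finset.coe_image, Set.mem_image]
      exact ⟨(i, j), by simp⟩
  · rw [eq_top_iff]
    rintro x -
    rw [matrix_eq_sum_single x]
    apply Submodule.sum_mem
    intro i _
    apply Submodule.sum_mem
    intro j _
    have hdec : Matrix.single i j (x i j)
        = (x i j * (p:ℚ_[p])^(-(b i - b j))) •
          Matrix.single i j ((p:ℚ_[p])^(b i - b j)) := by
      rw [smul_single, smul_eq_mul, mul_assoc, ← zpow_add₀ pQ_ne_zero,
        neg_add_cancel, zpow_zero, mul_one]
    rw [hdec]
    have hg : Matrix.single i j ((p:ℚ_[p])^(b i - b j)) ∈ (↑(DOrd p b) : Set _) := by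
      rw [DOrd_carrier, std_mem_EOrd, norm_pQ_zpow]
      exact le_of_eq rfl
    exact Submodule.smul_mem _ _ (Submodule.subset_span hg)

end DOrdSec

section Classify
variable {p n}

set_option maxHeartbeats 1000000 in
lemma order_bounded (O : Subring (Matrix (Fin 4) (Fin 4) ℚ_[p])) (hO : IsOrder p O) :
    ∃ M : ℤ, ∀ m ∈ O, ∀ a b : Fin 4, ‖m a b‖ ≤ (p:ℝ)^M := by
  obtain ⟨S, hSO, hspan⟩ := hO.2.1
  have hCex : ∃ C : ℝ, 0 ≤ C ∧ ∀ s ∈ S, ∀ a b : Fin 4, ‖s a b‖ ≤ C := by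
    refine ⟨∑ s ∈ S, ∑ a : Fin 4, ∑ b : Fin 4, ‖s a b‖, ?_, ?_⟩
    · exact Finset.sum_nonneg fun s _ => Finset.sum_nonneg fun a _ =>
        Finset.sum_nonneg fun b _ => norm_nonneg _
    · intro s hs a b
      have h1 : ‖s a b‖ ≤ ∑ b' : Fin 4, ‖s a b'‖ :=
        Finset.single_le_sum (fun _ _ => norm_nonneg _) (Finset.mem_univ b)
      have h2 : (∑ b' : Fin 4, ‖s a b'‖) ≤ ∑ a' : Fin 4, ∑ b' : Fin 4, ‖s a' b'‖ :=
        Finset.single_le_sum (f := fun a' => ∑ b' : Fin 4, ‖s a' b'‖)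
          (fun _ _ => Finset.sum_nonneg fun _ _ => norm_nonneg _) (Finset.mem_univ a)
      have h3 : (∑ a' : Fin 4, ∑ b' : Fin 4, ‖s a' b'‖)
          ≤ ∑ s' ∈ S, ∑ a' : Fin 4, ∑ b' : Fin 4, ‖s' a' b'‖ :=
        Finset.single_le_sum (f := fun s' => ∑ a' : Fin 4, ∑ b' : Fin 4, ‖s' a' b'‖)
          (fun _ _ => Finset.sum_nonneg fun _ _ =>
            Finset.sum_nonneg fun _ _ => norm_nonneg _) hs
      linarith
  obtain ⟨C, hC0, hsC⟩ := hCex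
  obtain ⟨M, hM⟩ := pow_unbounded_of_one_lt C (one_lt_pR (p := p))
  refine ⟨(M:ℤ), fun m hm a b => ?_⟩
  have key : ∀ a b : Fin 4, ‖m a b‖ ≤ C := by
    refine Submodule.span_induction (p := fun x _ => ∀ a b : Fin 4, ‖x a b‖ ≤ C)
      ?_ ?_ ?_ ?_ (hspan m hm)
    · intro x hx a b; exact hsC x hx a b
    · intro a b; rw [Matrix.zero_apply, norm_zero]; exact hC0
    · intro x y _ _ hx hy a b
      rw [Matrix.add_apply]
      exact le_trans (Padic.nonarchimedean _ _) (max_le (hx a b) (hy a b))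
    · intro c x _ hx a b
      have he : (c • x) a b = (c:ℚ_[p]) * x a b := rfl
      rw [he, norm_mul]
      calc ‖(c:ℚ_[p])‖ * ‖x a b‖ ≤ 1 * ‖x a b‖ :=
            mul_le_mul_of_nonneg_right c.2 (norm_nonneg _)
        _ = ‖x a b‖ := one_mul _
        _ ≤ C := hx a b
  calc ‖m a b‖ ≤ C := key a b
    _ ≤ (p:ℝ)^(M:ℤ) := by rw [zpow_natCast]; exact hM.le

lemma key_char (O : Subring (Matrix (Fin 4) (Fin 4) ℚ_[p])) (hO : IsOrder p O)
    (hR : paraOrder p n ⊆ ↑O) (i j : Fin 4) :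
    ∃ v : ℤ, ∀ c : ℚ_[p], (Matrix.single i j c ∈ O ↔ ‖c‖ ≤ (p:ℝ)^v) := by
  obtain ⟨M, hM⟩ := order_bounded O hO
  have hstab : ∀ (d : ℚ_[p]), Matrix.single i j d ∈ O → ∀ (w : ℚ_[p]), ‖w‖ ≤ 1 →
      Matrix.single i j (w * d) ∈ O := by
    intro d hd w hw
    have h1 := hO.1 ⟨w, hw⟩ _ hd
    convert h1 using 1
    ext a b
    show _ = (w:ℚ_[p]) * _
    simp only [Matrix.single, Matrix.of_apply]
    split_ifs <;> simp
  set P : ℤ → Prop := fun v => ∃ c : ℚ_[p], Matrix.single i j c ∈ O ∧ ‖c‖ = (p:ℝ)^v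
    with hPdef
  have hP0 : P (-(paraExp n i j)) := by
    refine ⟨(p:ℚ_[p])^(paraExp n i j), ?_, by rw [norm_pQ_zpow]⟩
    apply hR
    rw [paraOrder_eq, std_mem_EOrd, norm_pQ_zpow]
  have hbdd : ∀ v : ℤ, P v → v ≤ M := by
    rintro v ⟨c, hcO, hcn⟩
    have h1 := hM _ hcO i j
    rw [single_apply_same, hcn] at h1
    exact ppow_le_ppow_iff.mp h1
  obtain ⟨v₀, ⟨c₀, hc₀O, hc₀n⟩, hub⟩ := Int.exists_greatest_of_bdd ⟨M, hbdd⟩ ⟨_, hP0⟩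
  have hc₀ne : c₀ ≠ 0 := by
    intro h
    rw [h, norm_zero] at hc₀n
    exact absurd hc₀n.symm (ne_of_gt (ppow_pos _))
  refine ⟨v₀, fun c => ⟨?_, ?_⟩⟩
  · intro hc
    by_cases hc0 : c = 0
    · rw [hc0, norm_zero]; exact (ppow_pos _).le
    · have hPv : P (-(c.valuation)) := ⟨c, hc, Padic.norm_eq_zpow_neg_valuation hc0⟩
      rw [Padic.norm_eq_zpow_neg_valuation hc0]
      exact ppow_le_ppow (hub _ hPv)
  · intro hnorm
    have hw : ‖c * c₀⁻¹‖ ≤ 1 := by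
      rw [norm_mul, norm_inv, hc₀n]
      rw [mul_inv_le_iff₀ (by rw [← hc₀n]; exact norm_pos_iff.mpr hc₀ne), one_mul]
      exact hnorm
    have h2 := hstab c₀ hc₀O _ hw
    rw [mul_assoc, inv_mul_cancel₀ hc₀ne, mul_one] at h2
    exact h2

lemma classify (O : Subring (Matrix (Fin 4) (Fin 4) ℚ_[p]))
    (hmax : IsMaximalOrder p O) (hR : paraOrder p n ⊆ ↑O) :
    ∃ m : ℤ, 0 ≤ m ∧ m ≤ (n:ℤ) ∧
      (↑O : Set (Matrix (Fin 4) (Fin 4) ℚ_[p]))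
        = EOrd p (bdiff ![0, -m, 0, (n:ℤ) - m]) := by
  have hO := hmax.1
  choose vf hvf using fun i j => key_char (n := n) O hO hR i j
  have hEii : ∀ i : Fin 4, Matrix.single i i (1:ℚ_[p]) ∈ O := by
    intro i
    apply hR
    rw [paraOrder_eq, std_mem_EOrd, norm_one]
    have h0 : paraExp n i i = 0 := by fin_cases i <;> simp [paraExp]
    rw [h0, neg_zero, zpow_zero]
  have hentry : ∀ m ∈ O, ∀ i j : Fin 4, ‖m i j‖ ≤ (p:ℝ)^(vf i j) := by
    intro m hm i j
    have hmem : Matrix.single i j (m i j) ∈ O := by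
      rw [← std_mul_std m i j]
      exact Subring.mul_mem _ (Subring.mul_mem _ (hEii i) hm) (hEii j)
    exact (hvf i j (m i j)).mp hmem
  have htri : ∀ i j k : Fin 4, vf i j + vf j k ≤ vf i k := by
    intro i j k
    have h1 : Matrix.single i j ((p:ℚ_[p])^(-(vf i j))) ∈ O :=
      (hvf i j _).mpr (by rw [norm_pQ_zpow, neg_neg])
    have h2 : Matrix.single j k ((p:ℚ_[p])^(-(vf j k))) ∈ O :=
      (hvf j k _).mpr (by rw [norm_pQ_zpow, neg_neg])
    have h3 := Subring.mul_mem _ h1 h2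
    rw [single_mul_single_same, ← zpow_add₀ pQ_ne_zero] at h3
    have h4 := (hvf i k _).mp h3
    rw [norm_pQ_zpow] at h4
    have h5 := ppow_le_ppow_iff.mp h4
    omega
  have h00 : vf 0 0 = 0 := by
    have h1 : (0:ℤ) ≤ vf 0 0 := by
      have h2 := (hvf 0 0 1).mp (hEii 0)
      rw [norm_one] at h2
      have h3 : (p:ℝ)^(0:ℤ) ≤ (p:ℝ)^(vf 0 0) := by rwa [zpow_zero]
      exact ppow_le_ppow_iff.mp h3
    have h2 := htri 0 0 0
    omega
  set b : Fin 4 → ℤ := fun i => -(vf i 0) with hb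
  have hOle : O ≤ DOrd p b := by
    intro m hm
    show m ∈ EOrd p (bdiff b)
    intro i j
    have h1 := hentry m hm i j
    have h2 : vf i j ≤ -(bdiff b i j) := by
      have h3 := htri i j 0
      simp only [bdiff, hb]
      omega
    exact le_trans h1 (ppow_le_ppow h2)
  have hOeq := hmax.2 (DOrd p b) (DOrd_isOrder b) hOle
  have hcar : (↑O : Set (Matrix (Fin 4) (Fin 4) ℚ_[p])) = EOrd p (bdiff b) := by
    rw [← hOeq]; rfl
  have hcon : ∀ i j : Fin 4, b i - b j ≤ paraExp n i j := by
    intro i j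
    have hmem : Matrix.single i j ((p:ℚ_[p])^(paraExp n i j)) ∈ paraOrder p n := by
      rw [paraOrder_eq, std_mem_EOrd, norm_pQ_zpow]
    have h1 := hR hmem
    rw [hcar, std_mem_EOrd, norm_pQ_zpow] at h1
    have h2 := ppow_le_ppow_iff.mp h1
    simp only [bdiff] at h2
    omega
  have hb0 : b 0 = 0 := by simp [hb, h00]
  have c10 := hcon 1 0; have c01 := hcon 0 1; have c20 := hcon 2 0
  have c02 := hcon 0 2; have c30 := hcon 3 0; have c03 := hcon 0 3
  have c13 := hcon 1 3; have c31 := hcon 3 1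
  have e10 : paraExp n 1 0 = 0 := by simp [paraExp]
  have e01 : paraExp n 0 1 = (n:ℤ) := by simp [paraExp]
  have e20 : paraExp n 2 0 = 0 := by simp [paraExp]
  have e02 : paraExp n 0 2 = 0 := by simp [paraExp]
  have e30 : paraExp n 3 0 = (n:ℤ) := by simp [paraExp]
  have e03 : paraExp n 0 3 = 0 := by simp [paraExp]
  have e13 : paraExp n 1 3 = -(n:ℤ) := by simp [paraExp]
  have e31 : paraExp n 3 1 = (n:ℤ) := by simp [paraExp]
  rw [e10] at c10; rw [e01] at c01; rw [e20] at c20; rw [e02] at c02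
  rw [e30] at c30; rw [e03] at c03; rw [e13] at c13; rw [e31] at c31
  refine ⟨-(b 1), by omega, by omega, ?_⟩
  rw [hcar]
  apply EOrd_congr
  intro i j
  fin_cases i <;> fin_cases j <;> simp [bdiff] <;> omega

end Classify

section Final
variable {p n}

lemma EOrd_m0 : EOrd p (bdiff ![0, -(0:ℤ), 0, (n:ℤ) - 0]) = Omax1 p n := by
  rw [Omax1_eq]
  apply EOrd_congr
  intro i j
  fin_cases i <;> fin_cases j <;> simp [bdiff, a1] <;> try omega

lemma EOrd_mn : EOrd p (bdiff ![0, -(n:ℤ), 0, (n:ℤ) - (n:ℤ)]) = Omax2 p n := by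
  rw [Omax2_eq]
  apply EOrd_congr
  intro i j
  fin_cases i <;> fin_cases j <;> simp [bdiff, a2] <;> try omega

end Final

/-- The paramodular order of level `pⁿ` equals
`hⁿM₄(ℤ_p)h^{−n} ∩ W⁻¹hⁿM₄(ℤ_p)h^{−n}W`, and this is the unique way of writing it as an
intersection of two maximal orders. -/
theorem paramodular_intersection_of_two_maximal_orders :
    paraOrder p n = Omax1 p n ∩ Omax2 p n
    ∧ ∀ O O' : Subring (Matrix (Fin 4) (Fin 4) ℚ_[p]),
        IsMaximalOrder p O → IsMaximalOrder p O' →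
        (↑O ∩ ↑O' : Set (Matrix (Fin 4) (Fin 4) ℚ_[p])) = paraOrder p n →
        ({(↑O : Set (Matrix (Fin 4) (Fin 4) ℚ_[p])), ↑O'} :
            Set (Set (Matrix (Fin 4) (Fin 4) ℚ_[p])))
          = {Omax1 p n, Omax2 p n} := by
  constructor
  · exact part1
  · intro O O' hO hO' hint
    have hR : paraOrder p n ⊆ (↑O : Set (Matrix (Fin 4) (Fin 4) ℚ_[p])) := by
      rw [← hint]; exact Set.inter_subset_left
    have hR' : paraOrder p n ⊆ (↑O' : Set (Matrix (Fin 4) (Fin 4) ℚ_[p])) := by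
      rw [← hint]; exact Set.inter_subset_right
    obtain ⟨m, hm0, hmn, hOc⟩ := classify O hO hR
    obtain ⟨m', hm0', hmn', hOc'⟩ := classify O' hO' hR'
    have key : ∀ (i j : Fin 4) (K : ℤ), bdiff ![0, -m, 0, (n:ℤ) - m] i j ≤ K →
        bdiff ![0, -m', 0, (n:ℤ) - m'] i j ≤ K → paraExp n i j ≤ K := by
      intro i j K h1 h2
      have w1 : Matrix.single i j ((p:ℚ_[p])^K)
          ∈ (↑O : Set (Matrix (Fin 4) (Fin 4) ℚ_[p])) := by
        rw [hOc, std_mem_EOrd, norm_pQ_zpow]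
        exact ppow_le_ppow (by omega)
      have w2 : Matrix.single i j ((p:ℚ_[p])^K)
          ∈ (↑O' : Set (Matrix (Fin 4) (Fin 4) ℚ_[p])) := by
        rw [hOc', std_mem_EOrd, norm_pQ_zpow]
        exact ppow_le_ppow (by omega)
      have w3 : Matrix.single i j ((p:ℚ_[p])^K) ∈ paraOrder p n := by
        rw [← hint]; exact ⟨w1, w2⟩
      rw [paraOrder_eq, std_mem_EOrd, norm_pQ_zpow] at w3
      have h4 := ppow_le_ppow_iff.mp w3
      omega
    have k1 := key 0 1 (max m m') (by simp [bdiff] <;> omega) (by simp [bdiff] <;> omega)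
    have k2 := key 1 0 (max (-m) (-m')) (by simp [bdiff] <;> omega) (by simp [bdiff] <;> omega)
    have e01 : paraExp n 0 1 = (n:ℤ) := by simp [paraExp]
    have e10 : paraExp n 1 0 = 0 := by simp [paraExp]
    rw [e01] at k1
    rw [e10] at k2
    have hd : (m = 0 ∧ m' = (n:ℤ)) ∨ (m = (n:ℤ) ∧ m' = 0) := by omega
    rcases hd with ⟨h1, h2⟩ | ⟨h1, h2⟩
    · rw [h1] at hOc
      rw [h2] at hOc'
      rw [hOc, hOc', EOrd_m0, EOrd_mn]
    · rw [h1] at hOc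
      rw [h2] at hOc'
      rw [hOc, hOc', EOrd_m0, EOrd_mn]
      exact Set.pair_comm _ _
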